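/- Let L > 0, let φ : [0, L] → ℝ be continuous, and let γ : [0, L] → ℝ² be differentiable with γ'(s) = (cos φ(s), sin φ(s)) for all s ∈ [0, L] (a unit-speed planar curve). Then the linear control system dw/ds = G(s) f(s), w(0) = 0, is controllable on [0, L]: for every wrench vector w ∈ ℝ³ there exists a continuous function f : [0, L] → ℝ² such that ∫₀ᴸ G(s) f(s) ds = w. -/

import Mathlib

open Matrix Real

/-- The planar rotation matrix `R(θ)`. -/
noncomputable def rot (θ : ℝ) : Matrix (Fin 2) (Fin 2) ℝ :=
  !![Real.cos θ, -Real.sin θ; Real.sin θ, Real.cos θ]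

/-- `γ⊥ = R(π/2) γ`. -/
noncomputable def gperp (γ : Fin 2 → ℝ) : Fin 2 → ℝ :=
  (rot (Real.pi / 2)).mulVec γ

/-- The grasp map matrix `G`: its first two rows form `R(φ)`, its third row is `(γ⊥)ᵀ R(φ)`. -/
noncomputable def graspMap (φ : ℝ) (γ : Fin 2 → ℝ) : Matrix (Fin 3) (Fin 2) ℝ :=
  Matrix.of fun i j =>
    if h : (i : ℕ) < 2 then rot φ ⟨i, h⟩ j
    else Matrix.vecMul (gperp γ) (rot φ) j

lemma gperp_eq (g : Fin 2 → ℝ) : gperp g = ![-(g 1), g 0] := by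
  funext i
  fin_cases i <;>
    simp [gperp, rot, Matrix.mulVec, dotProduct, Fin.sum_univ_two, Matrix.vecHead, Matrix.vecTail]

lemma grasp_apply (θ : ℝ) (g u : Fin 2 → ℝ) :
    (graspMap θ g).mulVec ((rot θ)ᵀ.mulVec u) = ![u 0, u 1, gperp g ⬝ᵥ u] := by
  have h1 := sin_sq_add_cos_sq θ
  funext i
  fin_cases i <;>
    simp [graspMap, rot, gperp_eq, Matrix.mulVec, Matrix.vecMul, dotProduct,
      Fin.sum_univ_two, Matrix.vecHead, Matrix.vecTail]
  · linear_combination u 0 * h1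
  · linear_combination u 1 * h1
  · linear_combination (g 0 * u 1 - g 1 * u 0) * h1

/-- Controllability of the continuum grasp statics system: every wrench `w ∈ ℝ³`
is reached by some continuous contact-force profile `f`. -/
theorem stmt_0 (L : ℝ) (hL : 0 < L) (φ : ℝ → ℝ) (γ : ℝ → (Fin 2 → ℝ))
    (hφ : ContinuousOn φ (Set.Icc 0 L))
    (hγ : ∀ s ∈ Set.Icc (0:ℝ) L,
      HasDerivWithinAt γ ![Real.cos (φ s), Real.sin (φ s)] (Set.Icc 0 L) s) :
    ∀ w : Fin 3 → ℝ, ∃ f : ℝ → (Fin 2 → ℝ),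
      ContinuousOn f (Set.Icc 0 L) ∧
      (∫ s in (0:ℝ)..L, (graspMap (φ s) (γ s)).mulVec (f s)) = w := by
  have hL' : (0:ℝ) ≤ L := hL.le
  have hLne : L ≠ 0 := hL.ne'
  have cγ : ContinuousOn γ (Set.Icc 0 L) := fun s hs => (hγ s hs).continuousWithinAt
  have cγ0 : ContinuousOn (fun s => γ s 0) (Set.Icc 0 L) :=
    (continuous_apply (0 : Fin 2)).comp_continuousOn cγ
  have cγ1 : ContinuousOn (fun s => γ s 1) (Set.Icc 0 L) :=
    (continuous_apply (1 : Fin 2)).comp_continuousOn cγ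
  have key : ∀ g : ℝ → ℝ, ContinuousOn g (Set.Icc 0 L) →
      IntervalIntegrable g MeasureTheory.volume 0 L := by
    intro g hg
    apply ContinuousOn.intervalIntegrable
    rwa [Set.uIcc_of_le hL']
  set m0 : ℝ := (∫ s in (0:ℝ)..L, γ s 0) / L with hm0
  set m1 : ℝ := (∫ s in (0:ℝ)..L, γ s 1) / L with hm1
  have ch0 : ContinuousOn (fun s => γ s 0 - m0) (Set.Icc 0 L) := cγ0.sub continuousOn_const
  have ch1 : ContinuousOn (fun s => γ s 1 - m1) (Set.Icc 0 L) := cγ1.sub continuousOn_const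
  have ih0 : (∫ s in (0:ℝ)..L, (γ s 0 - m0)) = 0 := by
    rw [intervalIntegral.integral_sub (key _ cγ0) intervalIntegrable_const,
      intervalIntegral.integral_const, hm0]
    simp [smul_eq_mul]
    field_simp
    ring
  have ih1 : (∫ s in (0:ℝ)..L, (γ s 1 - m1)) = 0 := by
    rw [intervalIntegral.integral_sub (key _ cγ1) intervalIntegrable_const,
      intervalIntegral.integral_const, hm1]
    simp [smul_eq_mul]
    field_simp
    ring
  set q : ℝ → ℝ := fun s => (γ s 0 - m0) ^ 2 + (γ s 1 - m1) ^ 2 with hq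
  have cq : ContinuousOn q (Set.Icc 0 L) := (ch0.pow 2).add (ch1.pow 2)
  -- existence of a point where q is positive
  have hex : ∃ c ∈ Set.Icc (0:ℝ) L, 0 < q c := by
    by_contra hcon
    push_neg at hcon
    have hconst : ∀ s ∈ Set.Icc (0:ℝ) L, γ s = ![m0, m1] := by
      intro s hs
      have h : (γ s 0 - m0) ^ 2 + (γ s 1 - m1) ^ 2 ≤ 0 := hcon s hs
      have h0 : γ s 0 - m0 = 0 := by
        have : (γ s 0 - m0) ^ 2 = 0 := by nlinarith [sq_nonneg (γ s 0 - m0), sq_nonneg (γ s 1 - m1)]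
        exact pow_eq_zero_iff two_ne_zero |>.mp this
      have h1 : γ s 1 - m1 = 0 := by
        have : (γ s 1 - m1) ^ 2 = 0 := by nlinarith [sq_nonneg (γ s 0 - m0), sq_nonneg (γ s 1 - m1)]
        exact pow_eq_zero_iff two_ne_zero |>.mp this
      funext i
      fin_cases i
      · simpa using by linarith
      · simpa using by linarith
    have hs₀ : L / 2 ∈ Set.Icc (0:ℝ) L := ⟨by linarith, by linarith⟩
    have hz : HasDerivWithinAt γ 0 (Set.Icc 0 L) (L / 2) :=
      (hasDerivWithinAt_const (L / 2) (Set.Icc 0 L) (![m0, m1])).congr hconst (hconst _ hs₀)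
    have heq : ![Real.cos (φ (L / 2)), Real.sin (φ (L / 2))] = (0 : Fin 2 → ℝ) :=
      (uniqueDiffOn_Icc hL _ hs₀).eq_deriv _ (hγ _ hs₀) hz
    have hc0 : Real.cos (φ (L / 2)) = 0 := by simpa using congrFun heq 0
    have hs0 : Real.sin (φ (L / 2)) = 0 := by simpa using congrFun heq 1
    nlinarith [sin_sq_add_cos_sq (φ (L / 2))]
  set d : ℝ := ∫ s in (0:ℝ)..L, q s with hdd
  have hd : 0 < d :=
    intervalIntegral.integral_pos hL cq (fun x _ => by positivity) hex
  intro w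
  set A : ℝ := ∫ s in (0:ℝ)..L, -(γ s 1) with hA
  set B : ℝ := ∫ s in (0:ℝ)..L, γ s 0 with hB
  set a : ℝ := w 0 / L with ha
  set b : ℝ := w 1 / L with hb
  set c : ℝ := (w 2 - (a * A + b * B)) / d with hc
  set u : ℝ → Fin 2 → ℝ :=
    fun s => ![a - c * (γ s 1 - m1), b + c * (γ s 0 - m0)] with hu
  have cu0 : ContinuousOn (fun s => a - c * (γ s 1 - m1)) (Set.Icc 0 L) :=
    continuousOn_const.sub (continuousOn_const.mul ch1)
  have cu1 : ContinuousOn (fun s => b + c * (γ s 0 - m0)) (Set.Icc 0 L) :=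
    continuousOn_const.add (continuousOn_const.mul ch0)
  refine ⟨fun s => (rot (φ s))ᵀ.mulVec (u s), ?_, ?_⟩
  · -- continuity
    rw [continuousOn_pi]
    intro i
    have ccos : ContinuousOn (fun s => Real.cos (φ s)) (Set.Icc 0 L) :=
      Real.continuous_cos.comp_continuousOn hφ
    have csin : ContinuousOn (fun s => Real.sin (φ s)) (Set.Icc 0 L) :=
      Real.continuous_sin.comp_continuousOn hφ
    fin_cases i
    · simp [rot, Matrix.mulVec, dotProduct, Fin.sum_univ_two, hu]
      exact (ccos.mul cu0).add (csin.mul cu1)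
    · simp [rot, Matrix.mulVec, dotProduct, Fin.sum_univ_two, hu]
      exact ((csin.mul cu0).neg).add (ccos.mul cu1)
  · -- the integral
    have smulc : ∀ g : ℝ → ℝ, IntervalIntegrable g MeasureTheory.volume 0 L →
        ∀ v : Fin 3 → ℝ, IntervalIntegrable (fun s => g s • v) MeasureTheory.volume 0 L :=
      fun g hg v => ⟨hg.1.smul_const v, hg.2.smul_const v⟩
    simp only [grasp_apply, gperp_eq]
    have hrw : Set.EqOn
        (fun s => ![u s 0, u s 1, ![-(γ s 1), γ s 0] ⬝ᵥ u s])
        (fun s => (a - c * (γ s 1 - m1)) • (![1,0,0] : Fin 3 → ℝ)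
          + ((b + c * (γ s 0 - m0)) • (![0,1,0] : Fin 3 → ℝ)
          + (-(γ s 1) * (a - c * (γ s 1 - m1)) + γ s 0 * (b + c * (γ s 0 - m0)))
              • (![0,0,1] : Fin 3 → ℝ)))
        (Set.uIcc 0 L) := by
      intro s _
      funext i
      fin_cases i <;> simp [hu, dotProduct, Fin.sum_univ_two]
    rw [intervalIntegral.integral_congr hrw]
    have c2 : ContinuousOn
        (fun s => -(γ s 1) * (a - c * (γ s 1 - m1)) + γ s 0 * (b + c * (γ s 0 - m0)))
        (Set.Icc 0 L) := (cγ1.neg.mul cu0).add (cγ0.mul cu1)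
    rw [intervalIntegral.integral_add (smulc _ (key _ cu0) _)
      ((smulc _ (key _ cu1) _).add (smulc _ (key _ c2) _)),
      intervalIntegral.integral_add (smulc _ (key _ cu1) _) (smulc _ (key _ c2) _),
      intervalIntegral.integral_smul_const, intervalIntegral.integral_smul_const,
      intervalIntegral.integral_smul_const]
    have hJ0 : (∫ s in (0:ℝ)..L, (a - c * (γ s 1 - m1))) = w 0 := by
      rw [intervalIntegral.integral_sub intervalIntegrable_const ((key _ ch1).const_mul c),
        intervalIntegral.integral_const_mul, ih1, intervalIntegral.integral_const]
      simp [smul_eq_mul, ha]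
      field_simp
    have hJ1 : (∫ s in (0:ℝ)..L, (b + c * (γ s 0 - m0))) = w 1 := by
      rw [intervalIntegral.integral_add intervalIntegrable_const ((key _ ch0).const_mul c),
        intervalIntegral.integral_const_mul, ih0, intervalIntegral.integral_const]
      simp [smul_eq_mul, hb]
      field_simp
    have hJ2 : (∫ s in (0:ℝ)..L,
        (-(γ s 1) * (a - c * (γ s 1 - m1)) + γ s 0 * (b + c * (γ s 0 - m0)))) = w 2 := by
      have hsplit : ∀ s : ℝ,
          -(γ s 1) * (a - c * (γ s 1 - m1)) + γ s 0 * (b + c * (γ s 0 - m0))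
          = a * (-(γ s 1)) + (b * (γ s 0)
            + c * (q s + (m1 * (γ s 1 - m1) + m0 * (γ s 0 - m0)))) := by
        intro s
        simp only [hq]
        ring
      simp only [hsplit]
      rw [intervalIntegral.integral_add ((key (fun s => -γ s 1) cγ1.neg).const_mul a)
          (((key _ cγ0).const_mul b).add
            ((key (fun s => q s + (m1 * (γ s 1 - m1) + m0 * (γ s 0 - m0)))
              (cq.add ((continuousOn_const.mul ch1).add
              (continuousOn_const.mul ch0)))).const_mul c)),
        intervalIntegral.integral_add ((key _ cγ0).const_mul b)
          ((key (fun s => q s + (m1 * (γ s 1 - m1) + m0 * (γ s 0 - m0)))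
            (cq.add ((continuousOn_const.mul ch1).add
            (continuousOn_const.mul ch0)))).const_mul c),
        intervalIntegral.integral_const_mul, intervalIntegral.integral_const_mul,
        intervalIntegral.integral_const_mul,
        intervalIntegral.integral_add (key _ cq)
          (((key _ ch1).const_mul m1).add ((key _ ch0).const_mul m0)),
        intervalIntegral.integral_add ((key _ ch1).const_mul m1) ((key _ ch0).const_mul m0),
        intervalIntegral.integral_const_mul, intervalIntegral.integral_const_mul,
        ih0, ih1]
      rw [← hdd, ← hA, ← hB]
      rw [hc]
      field_simp
      ring
    rw [hJ0, hJ1, hJ2]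
    funext i
    fin_cases i <;> simp
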